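/- Let m ≥ 1 and q = 4^m, and let 1 ≤ k ≤ q. Then there exist F4-linear codes C ⊆ D ⊆ F4^{mq} such that C is the repetition code {λ·(1,1,…,1) : λ ∈ F4} (with parameters [mq, 1, mq]), and D has F4-dimension mk and minimum distance at least q − k + 1. -/

import Mathlib

abbrev F4 : Type := GaloisField 2 2
noncomputable instance : Fintype F4 := Fintype.ofFinite _
noncomputable instance : DecidableEq F4 := Classical.decEq _

/-- The minimum Hamming weight of the nonzero elements of a code (= the minimum
distance of a linear code). -/
noncomputable def minWt {m : ℕ} (C : Set (Fin m → F4)) : ℕ :=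
  sInf {r : ℕ | ∃ v ∈ C, v ≠ 0 ∧ r = hammingNorm v}

open Polynomial

lemma F4_card : Fintype.card F4 = 4 := by
  have h := GaloisField.card 2 2 (by norm_num)
  simpa [Nat.card_eq_fintype_card] using h

/-- The field `GF(4^m)`, built as the splitting field of `X^(2^(2m)) - X` over `F4`. -/
noncomputable def Fbig (m : ℕ) : Type := SplittingField (X ^ 2 ^ (2 * m) - X : F4[X])

noncomputable instance (m : ℕ) : Field (Fbig m) :=
  inferInstanceAs (Field (SplittingField _))

noncomputable instance (m : ℕ) : Algebra F4 (Fbig m) := inferInstanceAs (Algebra F4 (SplittingField _))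

instance (m : ℕ) : IsSplittingField F4 (Fbig m) (X ^ 2 ^ (2 * m) - X) :=
  IsSplittingField.splittingField _

instance Fbig_charP (m : ℕ) : CharP (Fbig m) 2 :=
  (Algebra.charP_iff F4 (Fbig m) 2).mp (by infer_instance)

instance (m : ℕ) : FiniteDimensional F4 (Fbig m) := by
  exact IsSplittingField.finiteDimensional (L := Fbig m) (f := (X ^ 2 ^ (2 * m) - X : F4[X]))

instance (m : ℕ) : Finite (Fbig m) := Module.finite_of_finite F4

lemma two_pow_two_mul (m : ℕ) : (2 : ℕ) ^ (2 * m) = 4 ^ m := by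
  rw [pow_mul]; norm_num

lemma Fbig_finrank (m : ℕ) (hm : m ≠ 0) : Module.finrank F4 (Fbig m) = m := by
  haveI : Fintype (Fbig m) := Fintype.ofFinite (Fbig m)
  set g : F4[X] := X ^ 2 ^ (2 * m) - X with hg
  have h2m : 2 * m ≠ 0 := by omega
  have aux : g ≠ 0 := FiniteField.X_pow_card_pow_sub_X_ne_zero _ h2m one_lt_two
  have key : Fintype.card (g.rootSet (Fbig m)) = g.natDegree :=
    card_rootSet_eq_natDegree (galois_poly_separable 2 _ (dvd_pow (dvd_refl 2) h2m))
      (SplittingField.splits g)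
  have nat_degree_eq : g.natDegree = 2 ^ (2 * m) :=
    FiniteField.X_pow_card_pow_sub_X_natDegree_eq _ h2m one_lt_two
  rw [nat_degree_eq] at key
  suffices hU : g.rootSet (Fbig m) = Set.univ by
    simp_rw [hU, ← Fintype.ofEquiv_card (Equiv.Set.univ _)] at key
    rw [@Module.card_eq_pow_finrank F4 _ _ _ _ _ (_), F4_card, two_pow_two_mul] at key
    exact Nat.pow_right_injective (by norm_num) key
  rw [Set.eq_univ_iff_forall]
  suffices h' : ∀ (x) (_ : x ∈ (⊤ : Subalgebra F4 (Fbig m))),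
      x ∈ (X ^ 2 ^ (2 * m) - X : F4[X]).rootSet (Fbig m) by simpa using h'
  rw [← IsSplittingField.adjoin_rootSet (L := Fbig m) (f := (X ^ 2 ^ (2 * m) - X : F4[X]))]
  simp_rw [Algebra.mem_adjoin_iff]
  intro x hx
  refine Subring.closure_induction ?_ ?_ ?_ ?_ ?_ ?_ hx <;> simp_rw [← hg, mem_rootSet_of_ne aux]
  · rintro x (⟨r, rfl⟩ | hx)
    · simp only [g, map_sub, map_pow, aeval_X]
      rw [← map_pow]
      have hr : r ^ 2 ^ (2 * m) = r := by
        rw [two_pow_two_mul]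
        have h4 := FiniteField.pow_card_pow (K := F4) (n := m) (a := r)
        rwa [F4_card] at h4
      rw [hr, sub_self]
    · dsimp only [Fbig] at hx
      exact (mem_rootSet_of_ne aux).mp hx
  · rw [← coeff_zero_eq_aeval_zero']
    simp only [g, coeff_X_pow, coeff_X_zero, sub_zero, _root_.map_eq_zero, ite_eq_right_iff,
      one_ne_zero, coeff_sub]
    intro hn
    exact absurd hn.symm (by positivity)
  · simp [g]
  · simp only [g, aeval_X_pow, aeval_X, map_sub, add_pow_char_pow, sub_eq_zero]
    intro x y _ _ hx hy
    rw [hx, hy]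
  · intro x _ hx
    simp only [g, sub_eq_zero, aeval_X_pow, aeval_X, map_sub, sub_neg_eq_add] at *
    rw [neg_pow, hx, neg_one_pow_char_pow]
    simp
  · simp only [g, aeval_X_pow, aeval_X, map_sub, mul_pow, sub_eq_zero]
    intro x y _ _ hx hy
    rw [hx, hy]

lemma Fbig_card (m : ℕ) (hm : m ≠ 0) [Fintype (Fbig m)] : Fintype.card (Fbig m) = 4 ^ m := by
  rw [Module.card_eq_pow_finrank (K := F4) (V := Fbig m), F4_card, Fbig_finrank m hm]

section Construction

variable (m : ℕ)

/-- The concatenation encoder. -/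
noncomputable def enc (φ : Fbig m →ₗ[F4] (Fin m → F4))
    (σ : Fin (m * 4 ^ m) ≃ Fbig m × Fin m) :
    (Fbig m)[X] →ₗ[F4] (Fin (m * 4 ^ m) → F4) where
  toFun p := fun i => φ (p.eval (σ i).1) ((σ i).2)
  map_add' p q := by funext i; simp
  map_smul' c p := by
    funext i
    simp [Polynomial.eval_smul]

end Construction

/-- Let `m ≥ 1`, `q = 4^m`, `1 ≤ k ≤ q`.  Then there are nested
`F4`-linear codes `C ⊆ D ⊆ F4^{mq}` where `C` is the repetition code
`{λ·(1,…,1) : λ ∈ F4}` (with parameters `[mq, 1, mq]`), and `D` has `F4`-dimension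
`mk` and minimum distance at least `q − k + 1`. -/
theorem exists_nested_codes_from_concatenated_RS (m k : ℕ) (hm : 1 ≤ m)
    (hk1 : 1 ≤ k) (hkq : k ≤ 4 ^ m) :
    ∃ C D : Submodule F4 (Fin (m * 4 ^ m) → F4),
      C ≤ D ∧
      (C : Set (Fin (m * 4 ^ m) → F4)) =
        {w : Fin (m * 4 ^ m) → F4 | ∃ lam : F4, w = fun _ => lam} ∧
      Module.finrank F4 C = 1 ∧
      minWt (C : Set (Fin (m * 4 ^ m) → F4)) = m * 4 ^ m ∧
      Module.finrank F4 D = m * k ∧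
      4 ^ m - k + 1 ≤ minWt (D : Set (Fin (m * 4 ^ m) → F4)) := by
  classical
  have hm0 : m ≠ 0 := by omega
  haveI : Fintype (Fbig m) := Fintype.ofFinite _
  have hcard : Fintype.card (Fbig m) = 4 ^ m := Fbig_card m hm0
  -- an F4-linear identification of Fbig m with F4^m
  have hfr : Module.finrank F4 (Fbig m) = Module.finrank F4 (Fin m → F4) := by
    rw [Fbig_finrank m hm0, Module.finrank_fin_fun]
  let φ : Fbig m ≃ₗ[F4] (Fin m → F4) := LinearEquiv.ofFinrankEq _ _ hfr
  -- index identification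
  have hidx : Fintype.card (Fin (m * 4 ^ m)) = Fintype.card (Fbig m × Fin m) := by
    simp [hcard, mul_comm]
  let σ : Fin (m * 4 ^ m) ≃ Fbig m × Fin m := Fintype.equivOfCardEq hidx
  let E := enc m (φ : Fbig m →ₗ[F4] (Fin m → F4)) σ
  have hE_apply : ∀ (p : (Fbig m)[X]) (i : Fin (m * 4 ^ m)),
      E p i = φ (p.eval (σ i).1) ((σ i).2) := fun _ _ => rfl
  -- E is injective on polynomials of degree < 4^m
  have hEinj : ∀ p ∈ degreeLT (Fbig m) k, E p = 0 → p = 0 := by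
    intro p hp hEp
    by_contra hp0
    -- all evaluations vanish
    have heval : ∀ α : Fbig m, p.eval α = 0 := by
      intro α
      have hv : φ (p.eval α) = 0 := by
        funext j
        have := congrFun hEp (σ.symm (α, j))
        simpa [hE_apply, Equiv.apply_symm_apply] using this
      have := φ.injective (by simpa using hv)
      simpa using this
    -- so p has at least 4^m roots, but degree < k ≤ 4^m
    have hsub : (Finset.univ : Finset (Fbig m)) ⊆ p.roots.toFinset := by
      intro α _
      simp [Multiset.mem_toFinset, mem_roots, hp0, IsRoot, heval α]
    have h1 : (4 : ℕ) ^ m ≤ p.roots.toFinset.card := by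
      have := Finset.card_le_card hsub
      simpa [Finset.card_univ, hcard] using this
    have h2 : p.roots.toFinset.card ≤ p.natDegree :=
      le_trans (Multiset.toFinset_card_le _) (Polynomial.card_roots' p)
    have h3 : p.natDegree < k := by
      have := (Polynomial.mem_degreeLT.mp hp)
      exact Polynomial.natDegree_lt_iff_degree_lt hp0 |>.mpr (by exact_mod_cast this)
    omega
  -- the codes
  let allones : Fin (m * 4 ^ m) → F4 := fun _ => 1
  let C : Submodule F4 (Fin (m * 4 ^ m) → F4) := Submodule.span F4 {allones}
  let D : Submodule F4 (Fin (m * 4 ^ m) → F4) :=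
    Submodule.map E ((degreeLT (Fbig m) k).restrictScalars F4)
  have hpos : 0 < m * 4 ^ m := by positivity
  have hallones_ne : allones ≠ 0 := by
    intro h
    have := congrFun h ⟨0, hpos⟩
    simp [allones] at this
  -- allones ∈ D via a constant polynomial
  have hconst_mem : ∀ c : Fbig m, (Polynomial.C c) ∈ degreeLT (Fbig m) k := by
    intro c
    rw [Polynomial.mem_degreeLT]
    exact lt_of_le_of_lt Polynomial.degree_C_le (by exact_mod_cast hk1)
  have hallones_mem : allones ∈ D := by
    refine ⟨Polynomial.C (φ.symm (fun _ => 1)), hconst_mem _, ?_⟩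
    funext i
    simp [hE_apply, allones]
  have hCD : C ≤ D := by
    rw [Submodule.span_le, Set.singleton_subset_iff]
    exact hallones_mem
  -- coercion of C
  have hCset : (C : Set (Fin (m * 4 ^ m) → F4)) =
      {w : Fin (m * 4 ^ m) → F4 | ∃ lam : F4, w = fun _ => lam} := by
    ext w
    simp only [SetLike.mem_coe, Set.mem_setOf_eq]
    rw [Submodule.mem_span_singleton]
    constructor
    · rintro ⟨a, rfl⟩
      exact ⟨a, by funext i; simp [allones]⟩
    · rintro ⟨lam, rfl⟩
      exact ⟨lam, by funext i; simp [allones]⟩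
  -- finrank C = 1
  have hCrank : Module.finrank F4 C = 1 := finrank_span_singleton hallones_ne
  -- hammingNorm of nonzero constants
  have hnorm_const : ∀ lam : F4, lam ≠ 0 →
      hammingNorm (fun _ : Fin (m * 4 ^ m) => lam) = m * 4 ^ m := by
    intro lam hlam
    unfold hammingNorm
    rw [show ({i | (fun _ : Fin (m * 4 ^ m) => lam) i ≠ 0} : Finset _) = Finset.univ by
      ext i; simp [hlam]]
    simp
  -- minWt C = m * 4^m
  have hCmin : minWt (C : Set (Fin (m * 4 ^ m) → F4)) = m * 4 ^ m := by
    unfold minWt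
    have hSet : {r : ℕ | ∃ v ∈ (C : Set (Fin (m * 4 ^ m) → F4)), v ≠ 0 ∧ r = hammingNorm v} =
        {m * 4 ^ m} := by
      ext r
      simp only [Set.mem_setOf_eq, Set.mem_singleton_iff]
      constructor
      · rintro ⟨v, hv, hv0, rfl⟩
        rw [hCset] at hv
        obtain ⟨lam, rfl⟩ := hv
        have hlam : lam ≠ 0 := by
          intro h; subst h; exact hv0 (by funext i; simp)
        exact hnorm_const lam hlam
      · rintro rfl
        refine ⟨allones, ?_, hallones_ne, (hnorm_const 1 one_ne_zero).symm⟩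
        rw [hCset]; exact ⟨1, by funext i; simp [allones]⟩
    rw [hSet, csInf_singleton]
  -- finrank D = m * k
  have hDrank : Module.finrank F4 D = m * k := by
    have hinj : Function.Injective
        (E.comp (((degreeLT (Fbig m) k).restrictScalars F4).subtype)) := by
      rw [← LinearMap.ker_eq_bot, LinearMap.ker_eq_bot']
      rintro ⟨p, hp⟩ h
      have hEp : E p = 0 := h
      exact Subtype.ext (hEinj p hp hEp)
    have hrange : D = LinearMap.range
        (E.comp (((degreeLT (Fbig m) k).restrictScalars F4).subtype)) := by
      rw [LinearMap.range_comp, Submodule.range_subtype]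
    rw [hrange, LinearMap.finrank_range_of_inj hinj]
    -- finrank of degreeLT k over F4
    have h1 : Module.finrank (Fbig m) (degreeLT (Fbig m) k) = k := by
      rw [LinearEquiv.finrank_eq (Polynomial.degreeLTEquiv (Fbig m) k),
        Module.finrank_fin_fun]
    haveI : Module.Finite (Fbig m) (degreeLT (Fbig m) k) :=
      Module.Finite.equiv (Polynomial.degreeLTEquiv (Fbig m) k).symm
    have h2 := Module.finrank_mul_finrank F4 (Fbig m) (degreeLT (Fbig m) k)
    rw [Fbig_finrank m hm0, h1] at h2
    exact h2.symm ▸ rfl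
  -- minimum distance of D
  have hDmin : 4 ^ m - k + 1 ≤ minWt (D : Set (Fin (m * 4 ^ m) → F4)) := by
    unfold minWt
    apply le_csInf
    · exact ⟨m * 4 ^ m, allones, hallones_mem, hallones_ne,
        (hnorm_const 1 one_ne_zero).symm⟩
    · rintro r ⟨v, hv, hv0, rfl⟩
      obtain ⟨p, hp, rfl⟩ := hv
      have hp0 : p ≠ 0 := by
        intro h; subst h; exact hv0 (map_zero E)
      -- the set of nonzero evaluations
      set T : Finset (Fbig m) := {α | p.eval α ≠ 0} with hT
      have hZcard : ({α | p.eval α = 0} : Finset (Fbig m)).card ≤ k - 1 := by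
        have hsub : ({α | p.eval α = 0} : Finset (Fbig m)) ⊆ p.roots.toFinset := by
          intro α hα
          simp only [Finset.mem_filter] at hα
          simp [Multiset.mem_toFinset, mem_roots, hp0, IsRoot, hα.2]
        have h2 : p.roots.toFinset.card ≤ p.natDegree :=
          le_trans (Multiset.toFinset_card_le _) (Polynomial.card_roots' p)
        have h3 : p.natDegree < k :=
          Polynomial.natDegree_lt_iff_degree_lt hp0 |>.mpr
            (by exact_mod_cast Polynomial.mem_degreeLT.mp hp)
        have := le_trans (Finset.card_le_card hsub) h2
        omega
      have hTcard : 4 ^ m - k + 1 ≤ T.card := by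
        have hsplit : ({α | p.eval α = 0} : Finset (Fbig m)).card + T.card = 4 ^ m := by
          have h0 := Finset.card_filter_add_card_filter_not
            (s := (Finset.univ : Finset (Fbig m))) (p := fun α => p.eval α = 0)
          simpa [hT, Finset.card_univ, hcard] using h0
        omega
      -- inject T into the support of E p
      have hchoice : ∀ α ∈ T, ∃ j : Fin m, φ (p.eval α) j ≠ 0 := by
        intro α hα
        have hne : p.eval α ≠ 0 := by
          rw [hT] at hα; simpa using hα
        have : φ (p.eval α) ≠ 0 := by
          intro h
          exact hne (by simpa using φ.injective (by simpa using h))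
        rwa [Function.ne_iff] at this
      choose j hj using hchoice
      have hmaps : ∀ α (hα : α ∈ T),
          σ.symm (α, j α hα) ∈ ({i | E p i ≠ 0} : Finset (Fin (m * 4 ^ m))) := by
        intro α hα
        simp only [Finset.mem_filter, Finset.mem_univ, true_and]
        rw [hE_apply, Equiv.apply_symm_apply]
        exact hj α hα
      have hcardle : T.card ≤ ({i | E p i ≠ 0} : Finset (Fin (m * 4 ^ m))).card := by
        apply Finset.card_le_card_of_injOn (fun α => if hα : α ∈ T then σ.symm (α, j α hα)
          else ⟨0, hpos⟩)
        · intro α hα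
          simp only [Finset.mem_coe] at hα ⊢
          simp only [dif_pos hα]
          exact hmaps α hα
        · intro α hα β hβ h
          simp only [Finset.mem_coe] at hα hβ
          simp only [dif_pos hα, dif_pos hβ] at h
          exact congrArg Prod.fst (σ.symm.injective h)
      unfold hammingNorm
      exact le_trans hTcard hcardle
  exact ⟨C, D, hCD, hCset, hCrank, hCmin, hDrank, hDmin⟩
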